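/- Let z̃ be a random vector in ℝ^d, z ∈ ℝ^d fixed, let w_1,…,w_C ∈ ℝ^d with ‖w_c‖ ≤ B and margin ⟨w_y, z⟩ ≥ ⟨w_c, z⟩ + γ for all c ≠ y (γ > 0). Then P(argmax_c ⟨w_c, z̃⟩ ≠ y) ≤ (4(C−1)B²/γ²) · E‖z̃ − z‖². -/

import Mathlib

open MeasureTheory
open scoped RealInnerProductSpace

theorem margin_misclassification_bound {Ω : Type*} [MeasureSpace Ω] (μ : Measure Ω)
    [IsProbabilityMeasure μ] (d C : ℕ) (B γ : ℝ) (hB : 0 < B) (hγ : 0 < γ)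
    (z : EuclideanSpace ℝ (Fin d)) (ztil : Ω → EuclideanSpace ℝ (Fin d))
    (hz : MemLp ztil 2 μ)
    (w : Fin C → EuclideanSpace ℝ (Fin d)) (hw : ∀ c, ‖w c‖ ≤ B)
    (y : Fin C) (hmargin : ∀ c, c ≠ y → ⟪w y, z⟫ ≥ ⟪w c, z⟫ + γ) :
    (μ {ω | ∃ c, c ≠ y ∧ ⟪w y, ztil ω⟫ ≤ ⟪w c, ztil ω⟫}).toReal ≤
      4 * (C - 1) * B ^ 2 / γ ^ 2 * ∫ ω, ‖ztil ω - z‖ ^ 2 ∂μ := by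
  have hint : Integrable (fun ω => ‖ztil ω - z‖ ^ 2) μ := by
    have h := (hz.sub (memLp_const z)).integrable_norm_rpow (by norm_num) (by norm_num)
    simpa [ENNReal.toReal_ofNat, Real.rpow_natCast, Pi.sub_apply] using h
  have hI : 0 ≤ ∫ ω, ‖ztil ω - z‖ ^ 2 ∂μ :=
    integral_nonneg fun ω => by positivity
  by_cases hex : ∃ c : Fin C, c ≠ y
  · obtain ⟨c₀, hc₀⟩ := hex
    -- C ≥ 2
    have hC2 : (2 : ℝ) ≤ C := by
      have : 2 ≤ C := by
        by_contra h
        interval_cases C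
        · exact y.elim0
        · exact hc₀ (Subsingleton.elim _ _)
      exact_mod_cast this
    -- event subset of {ω | γ^2 ≤ 4*B^2*‖ztil ω - z‖^2}
    have hsub : {ω | ∃ c, c ≠ y ∧ ⟪w y, ztil ω⟫ ≤ ⟪w c, ztil ω⟫} ⊆
        {ω | γ ^ 2 ≤ 4 * B ^ 2 * ‖ztil ω - z‖ ^ 2} := by
      rintro ω ⟨c, hc, hle⟩
      have hm := hmargin c hc
      have h1 : γ ≤ ⟪w y - w c, z - ztil ω⟫ := by
        simp only [inner_sub_left, inner_sub_right]
        linarith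
      have h2 : ⟪w y - w c, z - ztil ω⟫ ≤ ‖w y - w c‖ * ‖z - ztil ω‖ :=
        real_inner_le_norm _ _
      have h3 : ‖w y - w c‖ ≤ 2 * B := by
        calc ‖w y - w c‖ ≤ ‖w y‖ + ‖w c‖ := norm_sub_le _ _
        _ ≤ 2 * B := by have := hw y; have := hw c; linarith
      have h4 : ‖z - ztil ω‖ = ‖ztil ω - z‖ := norm_sub_rev _ _
      have h5 : γ ≤ 2 * B * ‖ztil ω - z‖ := by
        calc γ ≤ ‖w y - w c‖ * ‖z - ztil ω‖ := le_trans h1 h2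
        _ ≤ 2 * B * ‖ztil ω - z‖ := by
            rw [h4]; exact mul_le_mul_of_nonneg_right h3 (norm_nonneg _)
      have := mul_self_le_mul_self hγ.le h5
      simp only [Set.mem_setOf_eq]
      nlinarith
    have hmono := measure_mono (μ := μ) hsub
    have htop : μ {ω | γ ^ 2 ≤ 4 * B ^ 2 * ‖ztil ω - z‖ ^ 2} ≠ ⊤ := measure_ne_top _ _
    have htop2 : μ {ω | ∃ c, c ≠ y ∧ ⟪w y, ztil ω⟫ ≤ ⟪w c, ztil ω⟫} ≠ ⊤ := measure_ne_top _ _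
    have hmonoR : (μ {ω | ∃ c, c ≠ y ∧ ⟪w y, ztil ω⟫ ≤ ⟪w c, ztil ω⟫}).toReal ≤
        (μ {ω | γ ^ 2 ≤ 4 * B ^ 2 * ‖ztil ω - z‖ ^ 2}).toReal :=
      ENNReal.toReal_mono htop hmono
    have hmarkov := mul_meas_ge_le_integral_of_nonneg
      (f := fun ω => 4 * B ^ 2 * ‖ztil ω - z‖ ^ 2)
      (Filter.Eventually.of_forall fun ω => by positivity)
      (hint.const_mul _) (γ ^ 2)
    rw [integral_const_mul, Measure.real] at hmarkov
    have hγ2 : (0:ℝ) < γ ^ 2 := by positivity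
    have hstep : (μ {ω | γ ^ 2 ≤ 4 * B ^ 2 * ‖ztil ω - z‖ ^ 2}).toReal ≤
        4 * B ^ 2 / γ ^ 2 * ∫ ω, ‖ztil ω - z‖ ^ 2 ∂μ := by
      rw [div_mul_eq_mul_div, le_div_iff₀ hγ2]
      linarith
    calc (μ {ω | ∃ c, c ≠ y ∧ ⟪w y, ztil ω⟫ ≤ ⟪w c, ztil ω⟫}).toReal
        ≤ 4 * B ^ 2 / γ ^ 2 * ∫ ω, ‖ztil ω - z‖ ^ 2 ∂μ := le_trans hmonoR hstep
      _ ≤ 4 * (C - 1) * B ^ 2 / γ ^ 2 * ∫ ω, ‖ztil ω - z‖ ^ 2 ∂μ := by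
          apply mul_le_mul_of_nonneg_right _ hI
          rw [div_le_div_iff₀ hγ2 hγ2]
          have hB2 : (0:ℝ) < B ^ 2 := by positivity
          nlinarith [mul_nonneg (by linarith : (0:ℝ) ≤ (C:ℝ) - 2) (le_of_lt (mul_pos hB2 hγ2))]
  · push_neg at hex
    have : {ω | ∃ c, c ≠ y ∧ ⟪w y, ztil ω⟫ ≤ ⟪w c, ztil ω⟫} = ∅ := by
      ext ω; simp only [Set.mem_setOf_eq, Set.mem_empty_iff_false, iff_false]
      rintro ⟨c, hc, -⟩; exact hc (hex c)
    rw [this, measure_empty]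
    have hC1 : C = 1 := by
      by_contra h
      have h1 : 1 ≤ C := Fin.pos y
      have h2 : 2 ≤ C := by omega
      have e0 := hex ⟨0, by omega⟩
      have e1 := hex ⟨1, by omega⟩
      rw [← e1] at e0
      simp [Fin.ext_iff] at e0
    subst hC1
    simp
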